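/- Let X be a topological space, (U_i)_{i∈I} and (V_i)_{i∈I} indexed open covers of X such that the family of closures (cl(V_i))_{i∈I} is locally finite and cl(V_i) ⊂ U_i for all i. Let F be a sheaf of sets on X and s_i ∈ F(U_i) a family of sections. Define A = { x ∈ X : for all i,j ∈ I with x ∈ U_i ∩ U_j, the germs of s_i and s_j at x agree }. Then there exists an open subset W ⊂ X with A ⊂ W and a section t ∈ F(W) such that t restricted to W ∩ V_i equals s_i restricted to W ∩ V_i, for every i ∈ I. -/

import Mathlib

open TopologicalSpace CategoryTheory Opposite

universe u

/-- **partial gluing lemma.** Let `X` be a topological space, `(U i)` and `(V i)`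
open covers of `X` with `(closure (V i))` locally finite and `closure (V i) ⊆ U i`, `F` a sheaf of
sets on `X`, and `s i ∈ F(U i)` a family of sections.  Let
`A = { x | for all i j with x ∈ U i ∩ U j, the germs of s i and s j at x agree }`.
Then there are an open `W ⊆ X` containing `A` and a section `t ∈ F(W)` with
`t|_{W ∩ V i} = s i|_{W ∩ V i}` for all `i`. -/
theorem partial_gluing
    {X : TopCat.{u}} (F : TopCat.Sheaf (Type u) X) {I : Type u}
    (U V : I → Opens X)
    (hUcov : ∀ x : X, ∃ i, x ∈ U i)
    (hVcov : ∀ x : X, ∃ i, x ∈ V i)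
    (hVU : ∀ i, closure (V i : Set X) ⊆ (U i : Set X))
    (hlf : LocallyFinite fun i => closure (V i : Set X))
    (s : ∀ i, F.val.obj (op (U i))) :
    ∃ (W : Opens X) (t : F.val.obj (op W)),
      (∀ x : X,
        (∀ i j (hi : x ∈ U i) (hj : x ∈ U j),
          F.presheaf.germ (U i) x hi (s i) = F.presheaf.germ (U j) x hj (s j)) → x ∈ W) ∧
      ∀ i, F.val.map (homOfLE (inf_le_left : W ⊓ V i ≤ W)).op t =
        F.val.map (homOfLE (show W ⊓ V i ≤ U i from fun x hx =>
          hVU i (subset_closure hx.2))).op (s i) := by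
  classical
  -- The candidate open set: points where the germs of `s i` and `s j` agree for all
  -- `i, j` such that the point lies in `closure (V i)` and `closure (V j)`.
  set Wset : Set X := { x | ∀ i j (hi : x ∈ closure (V i : Set X))
      (hj : x ∈ closure (V j : Set X)),
      F.presheaf.germ (U i) x (hVU i hi) (s i) = F.presheaf.germ (U j) x (hVU j hj) (s j) }
    with hWset
  have hWopen : IsOpen Wset := by
    rw [isOpen_iff_forall_mem_open]
    intro x hx
    obtain ⟨N, hNx, hNfin⟩ := hlf x
    obtain ⟨N₀, hN₀N, hN₀open, hxN₀⟩ := mem_nhds_iff.mp hNx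
    -- For each pair `i j`, pick an open set on which `s i` and `s j` agree (if the germs agree).
    have key : ∀ i j, ∃ O : Opens X, x ∈ O ∧
        ((x ∈ closure (V i : Set X) ∧ x ∈ closure (V j : Set X)) →
          ∃ (iU : O ⟶ U i) (iV : O ⟶ U j), F.val.map iU.op (s i) = F.val.map iV.op (s j)) := by
      intro i j
      by_cases h : x ∈ closure (V i : Set X) ∧ x ∈ closure (V j : Set X)
      · obtain ⟨O, hxO, iU, iV, heq⟩ := F.presheaf.germ_eq x (hVU i h.1) (hVU j h.2)
          (s i) (s j) (hx i j h.1 h.2)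
        exact ⟨O, hxO, fun _ => ⟨iU, iV, heq⟩⟩
      · exact ⟨⊤, trivial, fun h' => absurd h' h⟩
    choose O hxO hO using key
    -- the finitely many "relevant" indices near `x`
    set S : Finset I := hNfin.toFinset with hS
    refine ⟨N₀ ∩ ((⋂ i ∈ S.filter (fun i => x ∉ closure (V i : Set X)),
        (closure (V i : Set X))ᶜ) ∩ ⋂ i ∈ S, ⋂ j ∈ S, (O i j : Set X)), ?_, ?_, ?_⟩
    · -- this neighbourhood is contained in `Wset`
      rintro y ⟨hyN₀, hy1, hy2⟩ i j hyi hyj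
      have hiS : i ∈ S := by
        simp only [hS, Set.Finite.mem_toFinset, Set.mem_setOf_eq]
        exact ⟨y, hyi, hN₀N hyN₀⟩
      have hjS : j ∈ S := by
        simp only [hS, Set.Finite.mem_toFinset, Set.mem_setOf_eq]
        exact ⟨y, hyj, hN₀N hyN₀⟩
      have hxi : x ∈ closure (V i : Set X) := by
        by_contra hxi
        have := Set.mem_iInter₂.mp hy1 i (Finset.mem_filter.mpr ⟨hiS, hxi⟩)
        exact this hyi
      have hxj : x ∈ closure (V j : Set X) := by
        by_contra hxj
        have := Set.mem_iInter₂.mp hy1 j (Finset.mem_filter.mpr ⟨hjS, hxj⟩)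
        exact this hyj
      obtain ⟨iU, iV, heq⟩ := hO i j ⟨hxi, hxj⟩
      have hyO : y ∈ O i j := Set.mem_iInter₂.mp (Set.mem_iInter₂.mp hy2 i hiS) j hjS
      exact F.presheaf.germ_ext (O i j) hyO iU iV heq
    · -- openness
      refine hN₀open.inter (IsOpen.inter ?_ ?_)
      · exact isOpen_biInter_finset fun i _ => isClosed_closure.isOpen_compl
      · exact isOpen_biInter_finset fun i _ =>
          isOpen_biInter_finset fun j _ => (O i j).2
    · -- contains x
      exact ⟨hxN₀, Set.mem_iInter₂.mpr fun i hi => (Finset.mem_filter.mp hi).2,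
        Set.mem_iInter₂.mpr fun i _ => Set.mem_iInter₂.mpr fun j _ => hxO i j⟩
  refine ⟨⟨Wset, hWopen⟩, ?_⟩
  set W : Opens X := ⟨Wset, hWopen⟩ with hW
  -- the covering family of `W`
  set P : I → Opens X := fun i => W ⊓ V i with hP
  have hPU : ∀ i, P i ≤ U i := fun i x hx => hVU i (subset_closure hx.2)
  set sf : ∀ i, F.val.obj (op (P i)) := fun i => F.val.map (homOfLE (hPU i)).op (s i) with hsf
  have hcov : W ≤ iSup P := by
    intro x hxW
    obtain ⟨i, hi⟩ := hVcov x
    exact Opens.mem_iSup.mpr ⟨i, hxW, hi⟩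
  have hcomp : TopCat.Presheaf.IsCompatible F.val P sf := by
    intro i j
    apply TopCat.Presheaf.section_ext F (P i ⊓ P j)
    intro y hy
    have hyW : y ∈ Wset := hy.1.1
    simp only [hsf, TopCat.Presheaf.germ_res_apply]
    exact hyW i j (subset_closure hy.1.2) (subset_closure hy.2.2)
  obtain ⟨t, ht, -⟩ := F.existsUnique_gluing' P W (fun i => homOfLE inf_le_left) hcov sf hcomp
  refine ⟨t, ?_, ?_⟩
  · intro x hx i j hxi hxj
    exact hx i j (hVU i hxi) (hVU j hxj)
  · intro i
    exact ht i
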